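/- arXiv:2304.14793 — 3 statements merged into one kernel-verified Lean document; each statement's English description precedes it below -/
import Mathlib

section
/- Let L be a GNN composed of d ≥ 1 layers applied to colored multigraphs. If colr^d(G)(v) = colr^d(H)(w), then L(G)(v) = L(H)(w). -/
open Classical

/-- The multiset of incoming neighbors of `v` in the multigraph with edge
multiplicity function `E` (with `E w v` the multiplicity of edge `w → v`). -/
def inc {V : Type*} [Fintype V] (E : V → V → ℕ) (v : V) : Multiset V :=
  Finset.univ.val.bind fun w => Multiset.replicate (E w v) w

/-- Cap all multiplicities of a multiset at `c ∈ ℕ∞`. -/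
noncomputable def capM {α : Type*} (c : ℕ∞) (M : Multiset α) : Multiset α :=
  letI := Classical.decEq α
  M.toFinset.val.bind fun x => Multiset.replicate ((min (M.count x : ℕ∞) c).toNat) x

/-- The type of colors obtained after `d` steps of color refinement, starting
from base colors in `Y`: a depth-`d` color is the previous color paired with the
multiset of previous colors of the incoming neighbors. -/
def CRt (Y : Type*) : ℕ → Type _
  | 0 => Y
  | (d+1) => CRt Y d × Multiset (CRt Y d)

/-- `d` steps of color refinement, starting from base coloring `g`. -/
def colr {V : Type*} [Fintype V] {Y : Type*} (E : V → V → ℕ) (g : V → Y) :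
    (d : ℕ) → V → CRt Y d
  | 0 => g
  | (d+1) => fun v => (colr E g d v, (inc E v).map (colr E g d))

/-- `d` steps of `c`-graded color refinement. -/
noncomputable def colrC {V : Type*} [Fintype V] {Y : Type*} (c : ℕ∞) (E : V → V → ℕ)
    (g : V → Y) : (d : ℕ) → V → CRt Y d
  | 0 => g
  | (d+1) => fun v => (colrC c E g d v, capM c ((inc E v).map (colrC c E g d)))

/-- The partition induced by `d` refinement steps is stable at `d`. -/
def stableAt {V : Type*} [Fintype V] {Y : Type*} (E : V → V → ℕ) (g : V → Y) (d : ℕ) : Prop :=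
  ∀ v w : V, colr E g d v = colr E g d w ↔ colr E g (d+1) v = colr E g (d+1) w

/-- The stable coloring number: least depth at which color refinement stabilizes. -/
noncomputable def stableNum {V : Type*} [Fintype V] {Y : Type*} (E : V → V → ℕ) (g : V → Y) : ℕ :=
  sInf { d | stableAt E g d }

/-- The stable coloring `colr^∞`. -/
noncomputable def colrInf {V : Type*} [Fintype V] {Y : Type*} (E : V → V → ℕ) (g : V → Y) :
    V → CRt Y (stableNum E g) :=
  colr E g (stableNum E g)

/-- The depth (number of refinement rounds) corresponding to `d ∈ ℕ∞`:
for `d = ∞` it is the stable coloring number of the graph. -/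
noncomputable def edepth {V : Type*} [Fintype V] {Y : Type*} (E : V → V → ℕ) (g : V → Y)
    (d : ℕ∞) : ℕ :=
  WithTop.untopD (stableNum E g) d

/-- Color refinement with depth `d ∈ ℕ∞` (stable coloring for `d = ∞`). -/
noncomputable def colrE' {V : Type*} [Fintype V] {Y : Type*} (E : V → V → ℕ) (g : V → Y)
    (d : ℕ∞) : V → CRt Y (edepth E g d) :=
  colr E g (edepth E g d)

/-- A substitution choosing one representative per class of the coloring `col`:
`ρ v` is in the class of `v`, and `ρ` is constant on classes. -/
def IsSubstWith {V : Type*} {C : Type*} (col : V → C) (ρ : V → V) : Prop :=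
  (∀ v, col (ρ v) = col v) ∧ ∀ v w, col v = col w → ρ v = ρ w

/-- Node set of the reduction: the chosen representatives. -/
def RNodes {V : Type*} (ρ : V → V) : Type _ := { v : V // ∃ u, ρ u = v }

noncomputable instance {V : Type*} [Fintype V] (ρ : V → V) : Fintype (RNodes ρ) := by
  unfold RNodes; exact Subtype.fintype _

instance {V : Type*} [DecidableEq V] (ρ : V → V) : DecidableEq (RNodes ρ) := by
  unfold RNodes; infer_instance

/-- Edge multiplicities of the reduction: `E'(v → w) = Σ_{v' ∈ [v]} E(v' → w)`. -/
noncomputable def reductE {V : Type*} [Fintype V] {C : Type*} (E : V → V → ℕ) (col : V → C)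
    (ρ : V → V) (a b : RNodes ρ) : ℕ :=
  ∑ v' ∈ Finset.univ.filter (fun v' => col v' = col a.val), E v' b.val

/-- Edge multiplicities of the `c`-graded reduction:
`E'(v → w) = min(Σ_{v' ∈ [v]} min(E(v' → w), c), c)`. -/
noncomputable def reductEC {V : Type*} [Fintype V] {C : Type*} (c : ℕ∞) (E : V → V → ℕ)
    (col : V → C) (ρ : V → V) (a b : RNodes ρ) : ℕ :=
  (min (↑(∑ v' ∈ Finset.univ.filter (fun v' => col v' = col a.val),
      (min (E v' b.val : ℕ∞) c).toNat) : ℕ∞) c).toNat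

/-- Coloring of the reduction: colors are inherited. -/
def reductG {V : Type*} {Y : Type*} (g : V → Y) (ρ : V → V) (a : RNodes ρ) : Y := g a.val

/-- A GNN layer of input dimension `p` and output dimension `q`. -/
structure GNNLayer (p q : ℕ) where
  h : ℕ
  agg : Multiset (Fin p → ℝ) → (Fin h → ℝ)
  comb : (Fin p → ℝ) → (Fin h → ℝ) → (Fin q → ℝ)

/-- The feature map transformer computed by a GNN layer. -/
def GNNLayer.apply {p q : ℕ} (L : GNNLayer p q) {V : Type*} [Fintype V]
    (E : V → V → ℕ) (g : V → Fin p → ℝ) : V → Fin q → ℝ :=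
  fun v => L.comb (g v) (L.agg ((inc E v).map g))

/-- A GNN: a nonempty sequence of layers with matching dimensions. -/
inductive GNN : ℕ → ℕ → Type
  | single : ∀ {p q}, GNNLayer p q → GNN p q
  | cons : ∀ {p r q}, GNNLayer p r → GNN r q → GNN p q

/-- Number of layers of a GNN. -/
def GNN.depth : ∀ {p q}, GNN p q → ℕ
  | _, _, .single _ => 1
  | _, _, .cons _ rest => rest.depth + 1

/-- The feature map transformer computed by a GNN. -/
def GNN.apply {V : Type*} [Fintype V] : ∀ {p q}, GNN p q → (V → V → ℕ) →
    (V → Fin p → ℝ) → V → Fin q → ℝ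
  | _, _, .single L, E, g => L.apply E g
  | _, _, .cons L rest, E, g => rest.apply E (L.apply E g)

/-- A GNN layer has width `c` if its aggregation only depends on multiplicities up to `c`. -/
def GNNLayer.HasWidth {p q : ℕ} (c : ℕ∞) (L : GNNLayer p q) : Prop :=
  ∀ M, L.agg M = L.agg (capM c M)

/-- A GNN has width `c` if all its layers do. -/
def GNN.HasWidth (c : ℕ∞) : ∀ {p q}, GNN p q → Prop
  | _, _, .single L => L.HasWidth c
  | _, _, .cons L rest => L.HasWidth c ∧ rest.HasWidth c

/-- Pushing a map on depth-1 colors to depth-`(d+1)` colors. -/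
def Fmap {Y Y' : Type*} (φ : Y × Multiset Y → Y') : ∀ d, CRt Y (d+1) → CRt Y' d
  | 0, c => φ c
  | (d+1), c => (Fmap φ d c.1, c.2.map (Fmap φ d))

lemma colr_step {V : Type*} [Fintype V] {Y Y' : Type*} (E : V → V → ℕ)
    (g : V → Y) (g' : V → Y') (φ : Y × Multiset Y → Y')
    (hg : ∀ v, g' v = φ (g v, (inc E v).map g)) :
    ∀ d v, colr E g' d v = Fmap φ d (colr E g (d+1) v) := by
  intro d
  induction d with
  | zero => intro v; exact hg v
  | succ d ih =>
      intro v
      show (colr E g' d v, (inc E v).map (colr E g' d)) = _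
      rw [show colr E g (d+2) v = (colr E g (d+1) v, (inc E v).map (colr E g (d+1))) from rfl]
      simp only [Fmap, Multiset.map_map]
      exact Prod.ext (ih v) (Multiset.map_congr rfl fun x _ => ih x)

lemma gnn_aux {p q : ℕ} (L : GNN p q) :
    ∀ {V W : Type*} [Fintype V] [Fintype W] (EG : V → V → ℕ) (g : V → Fin p → ℝ)
      (EH : W → W → ℕ) (h : W → Fin p → ℝ) (v : V) (w : W),
      colr EG g L.depth v = colr EH h L.depth w → L.apply EG g v = L.apply EH h w := by
  induction L with
  | single L =>
      intro V W _ _ EG g EH h v w hc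
      have h1 : ((g v, (inc EG v).map g) : (Fin _ → ℝ) × Multiset (Fin _ → ℝ))
          = (h w, (inc EH w).map h) := hc
      show L.comb (g v) (L.agg ((inc EG v).map g)) = L.comb (h w) (L.agg ((inc EH w).map h))
      injection h1 with ha hb
      rw [ha, hb]
  | cons L rest ih =>
      intro V W _ _ EG g EH h v w hc
      set φ : (Fin _ → ℝ) × Multiset (Fin _ → ℝ) → (Fin _ → ℝ) :=
        fun c => L.comb c.1 (L.agg c.2) with hφ
      have hgv : ∀ u, L.apply EG g u = φ (g u, (inc EG u).map g) := fun u => rfl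
      have hgw : ∀ u, L.apply EH h u = φ (h u, (inc EH u).map h) := fun u => rfl
      show rest.apply EG (L.apply EG g) v = rest.apply EH (L.apply EH h) w
      apply ih EG (L.apply EG g) EH (L.apply EH h) v w
      rw [colr_step EG g (L.apply EG g) φ hgv, colr_step EH h (L.apply EH h) φ hgw]
      have : (GNN.cons L rest).depth = rest.depth + 1 := rfl
      rw [this] at hc
      rw [hc]

/-- `d` refinement steps determine the output of any `d`-layer GNN. -/
theorem gnn_of_colr_eq {V W : Type*} [Fintype V] [Fintype W] {p q : ℕ}
    (EG : V → V → ℕ) (g : V → Fin p → ℝ) (EH : W → W → ℕ) (h : W → Fin p → ℝ)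
    (v : V) (w : W) (d : ℕ) (hd : 1 ≤ d) (L : GNN p q) (hL : L.depth = d)
    (hc : colr EG g d v = colr EH h d w) :
    L.apply EG g v = L.apply EH h w := by
  subst hL
  exact gnn_aux L EG g EH h v w hc
end

section
/- If d ∈ ℕ is greater than or equal to the stable coloring number of G, then any two d-reducts of G are isomorphic as colored multigraphs. -/
open Classical

section Aux

variable {V Y : Type*} [Fintype V] (E : V → V → ℕ) (g : V → Y)

theorem colr_succ_def (d : ℕ) (v : V) :
    colr E g (d+1) v = (colr E g d v, (inc E v).map (colr E g d)) := rfl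

theorem colr_pred_eq {d : ℕ} {v w : V}
    (h : colr E g (d+1) v = colr E g (d+1) w) : colr E g d v = colr E g d w := by
  rw [colr_succ_def, colr_succ_def] at h
  exact congrArg Prod.fst h

theorem g_eq_of_colr_eq {d : ℕ} {v w : V}
    (h : colr E g d v = colr E g d w) : g v = g w := by
  induction d with
  | zero => exact h
  | succ d ih => exact ih (colr_pred_eq E g h)

theorem stableAt_succ {d : ℕ} (h : stableAt E g d) : stableAt E g (d+1) := by
  intro v w
  constructor
  · intro hvw
    have h1 : colr E g d v = colr E g d w := colr_pred_eq E g hvw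
    have h2 : (inc E v).map (colr E g d) = (inc E w).map (colr E g d) := by
      have := hvw
      rw [colr_succ_def, colr_succ_def] at this
      exact congrArg Prod.snd this
    rw [colr_succ_def, colr_succ_def]
    refine Prod.ext hvw ?_
    by_cases hV : Nonempty V
    · obtain ⟨v₀⟩ := hV
      haveI : Nonempty (CRt Y (d+1)) := ⟨colr E g (d+1) v₀⟩
      set φ : CRt Y d → CRt Y (d+1) := fun c =>
        if hc : ∃ x, colr E g d x = c then colr E g (d+1) hc.choose
        else Classical.arbitrary _ with hφ
      have hφc : ∀ x : V, φ (colr E g d x) = colr E g (d+1) x := by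
        intro x
        have hc : ∃ y, colr E g d y = colr E g d x := ⟨x, rfl⟩
        simp only [hφ, dif_pos hc]
        exact (h _ _).mp hc.choose_spec
      calc (inc E v).map (colr E g (d+1))
          = (inc E v).map (φ ∘ colr E g d) := by
            apply Multiset.map_congr rfl; intro x _; exact (hφc x).symm
        _ = ((inc E v).map (colr E g d)).map φ := by rw [Multiset.map_map]
        _ = ((inc E w).map (colr E g d)).map φ := by rw [h2]
        _ = (inc E w).map (φ ∘ colr E g d) := by rw [Multiset.map_map]
        _ = (inc E w).map (colr E g (d+1)) := by
            apply Multiset.map_congr rfl; intro x _; exact hφc x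
    · exact absurd ⟨v⟩ hV
  · exact colr_pred_eq E g

/-- number of colors at depth `d`. -/
noncomputable def ncol (d : ℕ) : ℕ := (Set.range (colr E g d)).ncard

theorem ncol_img (d : ℕ) :
    Set.range (colr E g d) = Prod.fst '' Set.range (colr E g (d+1)) := by
  ext x
  constructor
  · rintro ⟨v, rfl⟩
    exact ⟨colr E g (d+1) v, ⟨v, rfl⟩, rfl⟩
  · rintro ⟨_, ⟨v, rfl⟩, rfl⟩
    exact ⟨v, rfl⟩

theorem ncol_mono (d : ℕ) : ncol E g d ≤ ncol E g (d+1) := by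
  unfold ncol
  rw [ncol_img]
  exact Set.ncard_image_le (Set.finite_range _)

theorem ncol_le (d : ℕ) : ncol E g d ≤ Fintype.card V := by
  unfold ncol
  rw [← Set.image_univ]
  calc (colr E g d '' Set.univ).ncard ≤ (Set.univ : Set V).ncard :=
        Set.ncard_image_le Set.finite_univ
    _ = Fintype.card V := by rw [Set.ncard_univ, Nat.card_eq_fintype_card]

theorem stableAt_of_ncol_eq {d : ℕ} (h : ncol E g d = ncol E g (d+1)) :
    stableAt E g d := by
  intro v w
  refine ⟨fun hvw => ?_, colr_pred_eq E g⟩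
  have hcard : (Prod.fst '' Set.range (colr E g (d+1))).ncard
      = (Set.range (colr E g (d+1))).ncard := by
    rw [← ncol_img]
    exact h
  have hinj := Set.injOn_of_ncard_image_eq hcard (Set.finite_range _)
  exact hinj (Set.mem_range_self v) (Set.mem_range_self w) hvw

theorem exists_stableAt : ∃ d, stableAt E g d := by
  by_contra hcon
  push_neg at hcon
  have hlt : ∀ d, ncol E g d < ncol E g (d+1) := fun d =>
    lt_of_le_of_ne (ncol_mono E g d) (fun h => hcon d (stableAt_of_ncol_eq E g h))
  have hge : ∀ d, d ≤ ncol E g d := by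
    intro d
    induction d with
    | zero => exact Nat.zero_le _
    | succ d ih => exact Nat.succ_le_of_lt (lt_of_le_of_lt ih (hlt d))
  exact absurd (ncol_le E g (Fintype.card V + 1))
    (not_le_of_gt (lt_of_lt_of_le (Nat.lt_succ_self _) (hge _)))

theorem stableAt_of_le {d : ℕ} (hd : stableNum E g ≤ d) : stableAt E g d := by
  have hmem : stableAt E g (stableNum E g) := Nat.sInf_mem (exists_stableAt E g)
  induction d, hd using Nat.le_induction with
  | base => exact hmem
  | succ d _ ih => exact stableAt_succ E g ih

theorem filter_sum_eq_count {C : Type*} (col : V → C) (w : V) (κ : C) :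
    ∑ v' ∈ Finset.univ.filter (fun v' => col v' = κ), E v' w
      = ((inc E w).map col).count κ := by
  rw [Finset.sum_filter]
  simp only [inc, Multiset.map_bind, Multiset.map_replicate, Multiset.count_bind,
    Multiset.count_replicate]
  rfl

theorem sum_eq_of_col_eq {d : ℕ} (hstab : stableAt E g d) {w w' : V}
    (hww' : colr E g d w = colr E g d w') (κ : CRt Y d) :
    ∑ v' ∈ Finset.univ.filter (fun v' => colr E g d v' = κ), E v' w
      = ∑ v' ∈ Finset.univ.filter (fun v' => colr E g d v' = κ), E v' w' := by
  classical
  have h := (hstab w w').mp hww'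
  rw [colr_succ_def, colr_succ_def] at h
  have h2 : (inc E w).map (colr E g d) = (inc E w').map (colr E g d) :=
    congrArg Prod.snd h
  rw [filter_sum_eq_count, filter_sum_eq_count, h2]

end Aux

/-- if `d` is at least the stable coloring number, any two
`d`-reducts of `G` are isomorphic as colored multigraphs. -/
theorem reducts_iso_of_stable {V Y : Type*} [Fintype V] [DecidableEq V] (E : V → V → ℕ)
    (g : V → Y) (d : ℕ) (hd : stableNum E g ≤ d) (ρ₁ ρ₂ : V → V)
    (h1 : IsSubstWith (colr E g d) ρ₁) (h2 : IsSubstWith (colr E g d) ρ₂) :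
    ∃ f : RNodes ρ₁ ≃ RNodes ρ₂,
      (∀ a, g (f a).val = g a.val) ∧
      ∀ a b, reductE E (colr E g d) ρ₂ (f a) (f b) = reductE E (colr E g d) ρ₁ a b := by
  classical
  obtain ⟨hρ₁a, hρ₁b⟩ := h1
  obtain ⟨hρ₂a, hρ₂b⟩ := h2
  have hstab : stableAt E g d := stableAt_of_le E g hd
  refine ⟨⟨fun a => ⟨ρ₂ a.val, a.val, rfl⟩, fun b => ⟨ρ₁ b.val, b.val, rfl⟩, ?_, ?_⟩, ?_, ?_⟩
  · rintro ⟨v, u, rfl⟩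
    apply Subtype.ext
    show ρ₁ (ρ₂ (ρ₁ u)) = ρ₁ u
    rw [hρ₁b _ _ (hρ₂a (ρ₁ u)), hρ₁b _ _ (hρ₁a u)]
  · rintro ⟨v, u, rfl⟩
    apply Subtype.ext
    show ρ₂ (ρ₁ (ρ₂ u)) = ρ₂ u
    rw [hρ₂b _ _ (hρ₁a (ρ₂ u)), hρ₂b _ _ (hρ₂a u)]
  · intro a
    exact g_eq_of_colr_eq E g (hρ₂a a.val)
  · intro a b
    show reductE E (colr E g d) ρ₂ ⟨ρ₂ a.val, a.val, rfl⟩ ⟨ρ₂ b.val, b.val, rfl⟩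
        = reductE E (colr E g d) ρ₁ a b
    unfold reductE
    have hfa : ∀ v' : V, (colr E g d v' = colr E g d (ρ₂ a.val))
        ↔ (colr E g d v' = colr E g d a.val) := by
      intro v'; rw [hρ₂a a.val]
    rw [Finset.filter_congr (fun v' _ => by
      simp only [eq_iff_iff]; exact hfa v')]
    exact sum_eq_of_col_eq E g hstab (hρ₂a b.val) _
end

section
/- Let H₁ = G/ρ₁ and H₂ = G/ρ₂ be two d-reducts of a colored multigraph G, and let f be an isomorphism from H₁ to H₂. Then f agrees with ρ₂ on the nodes of H₁: f(u) = ρ₂(u) for all u ∈ H₁. -/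
open Classical

lemma colr_anti {V Y : Type*} [Fintype V] (E : V → V → ℕ) (g : V → Y) :
    ∀ {d k : ℕ}, k ≤ d → ∀ v w : V, colr E g d v = colr E g d w →
      colr E g k v = colr E g k w := by
  intro d
  induction d with
  | zero => intro k hk v w h; interval_cases k; exact h
  | succ d ih =>
    intro k hk v w h
    rcases Nat.lt_or_ge k (d+1) with h' | h'
    · have hfst : colr E g d v = colr E g d w :=
        congrArg (fun x : CRt Y d × Multiset (CRt Y d) => x.1) h
      exact ih (Nat.lt_succ_iff.mp h') v w hfst
    · have : k = d + 1 := le_antisymm hk h'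
      subst this; exact h

lemma inc_map_equiv {V₁ V₂ : Type*} [Fintype V₁] [Fintype V₂]
    (E₁ : V₁ → V₁ → ℕ) (E₂ : V₂ → V₂ → ℕ) (f : V₁ ≃ V₂)
    (hE : ∀ v w, E₂ (f v) (f w) = E₁ v w) (v : V₁) :
    inc E₂ (f v) = (inc E₁ v).map f := by
  unfold inc
  rw [Multiset.map_bind]
  have huniv : (Finset.univ : Finset V₂).val = (Finset.univ : Finset V₁).val.map f := by
    rw [← Finset.map_univ_equiv f]; rfl
  rw [huniv, Multiset.bind_map]
  congr 1
  funext u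
  rw [Multiset.map_replicate, hE u v]

lemma colr_equiv {V₁ V₂ Y : Type*} [Fintype V₁] [Fintype V₂]
    (E₁ : V₁ → V₁ → ℕ) (E₂ : V₂ → V₂ → ℕ) (g₁ : V₁ → Y) (g₂ : V₂ → Y) (f : V₁ ≃ V₂)
    (hg : ∀ v, g₂ (f v) = g₁ v) (hE : ∀ v w, E₂ (f v) (f w) = E₁ v w) :
    ∀ (k : ℕ) (v : V₁), colr E₂ g₂ k (f v) = colr E₁ g₁ k v := by
  intro k
  induction k with
  | zero => exact hg
  | succ k ih =>
    intro v
    show (colr E₂ g₂ k (f v), (inc E₂ (f v)).map (colr E₂ g₂ k))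
       = (colr E₁ g₁ k v, (inc E₁ v).map (colr E₁ g₁ k))
    rw [ih v, inc_map_equiv E₁ E₂ f hE, Multiset.map_map]
    exact congrArg _ (Multiset.map_congr rfl fun u _ => ih u)

lemma subst_fix {V C : Type*} {col : V → C} {ρ : V → V} (h : IsSubstWith col ρ)
    (b : RNodes ρ) : ρ b.val = b.val := by
  obtain ⟨b, u, rfl⟩ := b
  exact h.2 _ _ (h.1 u)

lemma colr_reduct {V Y : Type*} [Fintype V] [DecidableEq V]
    (E : V → V → ℕ) (g : V → Y) (d : ℕ) (ρ : V → V)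
    (h : IsSubstWith (colr E g d) ρ) :
    ∀ k, k ≤ d → ∀ a : RNodes ρ,
      colr (reductE E (colr E g d) ρ) (reductG g ρ) k a = colr E g k a.val := by
  classical
  intro k
  induction k with
  | zero => intro _ a; rfl
  | succ k ih =>
    intro hk a
    have hk' : k ≤ d := Nat.le_of_succ_le hk
    show (colr (reductE E (colr E g d) ρ) (reductG g ρ) k a,
          (inc (reductE E (colr E g d) ρ) a).map (colr (reductE E (colr E g d) ρ) (reductG g ρ) k))
       = (colr E g k a.val, (inc E a.val).map (colr E g k))
    rw [ih hk' a]
    refine congrArg _ ?_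
    have hmap : (inc (reductE E (colr E g d) ρ) a).map
          (colr (reductE E (colr E g d) ρ) (reductG g ρ) k)
        = (inc (reductE E (colr E g d) ρ) a).map (fun b => colr E g k b.val) :=
      Multiset.map_congr rfl (fun b _ => ih hk' b)
    rw [hmap]
    unfold inc
    rw [Multiset.map_bind, Multiset.map_bind]
    simp only [Multiset.map_replicate]
    ext c
    rw [Multiset.count_bind, Multiset.count_bind]
    simp only [Multiset.count_replicate]
    show (∑ b : RNodes ρ, if colr E g k b.val = c then reductE E (colr E g d) ρ b a else 0)
       = ∑ w : V, if colr E g k w = c then E w a.val else 0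
    have hterm : ∀ b : RNodes ρ,
        (if colr E g k b.val = c then reductE E (colr E g d) ρ b a else 0)
        = ∑ v' ∈ Finset.univ.filter
            (fun v' : V => (⟨ρ v', v', rfl⟩ : RNodes ρ) = b),
            (if colr E g k v' = c then E v' a.val else 0) := by
      intro b
      have hfilter : Finset.univ.filter (fun v' : V => (⟨ρ v', v', rfl⟩ : RNodes ρ) = b)
          = Finset.univ.filter (fun v' => colr E g d v' = colr E g d b.val) := by
        apply Finset.filter_congr
        intro v' _
        constructor
        · intro he
          have hv : ρ v' = b.val := congrArg Subtype.val he
          rw [← hv, h.1 v']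
        · intro hcv
          have : ρ v' = b.val := by
            rw [h.2 _ _ hcv, subst_fix h b]
          exact Subtype.ext this
      rw [hfilter]
      by_cases hc : colr E g k b.val = c
      · rw [if_pos hc]
        unfold reductE
        apply Finset.sum_congr rfl
        intro v' hv'
        have hvk := colr_anti E g hk' v' b.val (Finset.mem_filter.mp hv').2
        rw [if_pos (hvk.trans hc)]
      · rw [if_neg hc]
        symm
        apply Finset.sum_eq_zero
        intro v' hv'
        have hvk := colr_anti E g hk' v' b.val (Finset.mem_filter.mp hv').2
        rw [if_neg (fun hcc => hc (hvk.symm.trans hcc))]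
    calc (∑ b : RNodes ρ, if colr E g k b.val = c then reductE E (colr E g d) ρ b a else 0)
        = ∑ b : RNodes ρ, ∑ v' ∈ Finset.univ.filter
            (fun v' : V => (⟨ρ v', v', rfl⟩ : RNodes ρ) = b),
            (if colr E g k v' = c then E v' a.val else 0) :=
          Finset.sum_congr rfl (fun b _ => hterm b)
      _ = ∑ w : V, if colr E g k w = c then E w a.val else 0 :=
          by convert (Finset.sum_fiberwise (κ := RNodes ρ) Finset.univ (fun v' : V => (⟨ρ v', v', rfl⟩ : RNodes ρ)) (fun w : V => if colr E g k w = c then E w a.val else 0)) <;> exact Iff.rfl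

/-- an isomorphism between two `d`-reducts agrees with `ρ₂`. -/
theorem iso_agrees_with_subst {V Y : Type*} [Fintype V] [DecidableEq V]
    (E : V → V → ℕ) (g : V → Y) (d : ℕ) (ρ₁ ρ₂ : V → V)
    (h1 : IsSubstWith (colr E g d) ρ₁) (h2 : IsSubstWith (colr E g d) ρ₂)
    (f : RNodes ρ₁ ≃ RNodes ρ₂)
    (hcol : ∀ a, g (f a).val = g a.val)
    (hedge : ∀ a b, reductE E (colr E g d) ρ₂ (f a) (f b) = reductE E (colr E g d) ρ₁ a b) :
    ∀ a : RNodes ρ₁, (f a).val = ρ₂ a.val := by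
  intro a
  have hinv := colr_equiv (reductE E (colr E g d) ρ₁) (reductE E (colr E g d) ρ₂)
      (reductG g ρ₁) (reductG g ρ₂) f hcol hedge d a
  have h1d := colr_reduct E g d ρ₁ h1 d le_rfl a
  have h2d := colr_reduct E g d ρ₂ h2 d le_rfl (f a)
  have hcc : colr E g d (f a).val = colr E g d a.val := by
    rw [← h1d, ← h2d, hinv]
  have := h2.2 _ _ hcc
  rwa [subst_fix h2 (f a)] at this
end
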